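/- Fix η ∈ [0,1]. Consider the sequential qubit strategy where Alice's states are ρ_{00} = (𝟙 + (σx+σz)/√2)/2, ρ_{11} = (𝟙 − (σx+σz)/√2)/2, ρ_{01} = (𝟙 + (σx−σz)/√2)/2, ρ_{10} = (𝟙 − (σx−σz)/√2)/2; Bob's Kraus operators are K_{b|y} = √(M_{b|y}) with M_{b|0} = (𝟙 + (−1)^b η σx)/2 and M_{b|1} = (𝟙 + (−1)^b η σz)/2; and Charlie's POVM elements are C_{c|0} = (𝟙 + (−1)^c σx)/2 and C_{c|1} = (𝟙 + (−1)^c σz)/2. Then W_AB = (2 + √2·η)/4 and W_AC = (4 + √2 + √(2 − 2η²))/8. -/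

import Mathlib

open Matrix ComplexOrder

noncomputable section

/-- The bit `x_y` of `x = (x₀, x₁)`. -/
def bit (x : Bool × Bool) (y : Bool) : Bool := if y then x.2 else x.1

/-- Alice–Bob witness `W_AB = (1/8) ∑_{x,y} tr[ρ_x K_{x_y|y}† K_{x_y|y}]`. -/
def WAB (ρ : Bool × Bool → Matrix (Fin 2) (Fin 2) ℂ)
    (K : Bool → Bool → Matrix (Fin 2) (Fin 2) ℂ) : ℝ :=
  (1 / 8) * ∑ x : Bool × Bool, ∑ y : Bool,
    ((ρ x * ((K y (bit x y))ᴴ * K y (bit x y))).trace).re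

/-- Alice–Charlie witness
`W_AC = (1/16) ∑_{x,y,b,z} tr[K_{b|y} ρ_x K_{b|y}† C_{x_z|z}]`. -/
def WAC (ρ : Bool × Bool → Matrix (Fin 2) (Fin 2) ℂ)
    (K C : Bool → Bool → Matrix (Fin 2) (Fin 2) ℂ) : ℝ :=
  (1 / 16) * ∑ x : Bool × Bool, ∑ y : Bool, ∑ b : Bool, ∑ z : Bool,
    ((K y b * ρ x * (K y b)ᴴ * C z (bit x z)).trace).re

/-- A sequential qubit strategy: four qubit states, two instruments (Kraus
operators), and two binary POVMs. -/
def ValidStrategy (ρ : Bool × Bool → Matrix (Fin 2) (Fin 2) ℂ)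
    (K C : Bool → Bool → Matrix (Fin 2) (Fin 2) ℂ) : Prop :=
  (∀ x, (ρ x).PosSemidef ∧ (ρ x).trace = 1) ∧
  (∀ y, (K y false)ᴴ * K y false + (K y true)ᴴ * K y true = 1) ∧
  (∀ z b, (C z b).PosSemidef) ∧
  (∀ z, C z false + C z true = 1)

/-- Pauli matrix σx. -/
def sigmaX : Matrix (Fin 2) (Fin 2) ℂ := !![0, 1; 1, 0]

/-- Pauli matrix σz. -/
def sigmaZ : Matrix (Fin 2) (Fin 2) ℂ := !![1, 0; 0, -1]

/-- Alice's optimal preparations: a square in the x–z disk of the Bloch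
sphere. -/
def rhoOpt : Bool × Bool → Matrix (Fin 2) (Fin 2) ℂ
  | (false, false) => (1 / 2 : ℂ) • (1 + ((Real.sqrt 2 : ℂ))⁻¹ • (sigmaX + sigmaZ))
  | (true, true) => (1 / 2 : ℂ) • (1 - ((Real.sqrt 2 : ℂ))⁻¹ • (sigmaX + sigmaZ))
  | (false, true) => (1 / 2 : ℂ) • (1 + ((Real.sqrt 2 : ℂ))⁻¹ • (sigmaX - sigmaZ))
  | (true, false) => (1 / 2 : ℂ) • (1 - ((Real.sqrt 2 : ℂ))⁻¹ • (sigmaX - sigmaZ))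

/-- Bob's unsharp POVM elements `M_{b|y} = (𝟙 + (−1)^b η σ)/2` with `σ = σx`
for `y = 0` and `σ = σz` for `y = 1`. -/
def Mopt (η : ℝ) (y b : Bool) : Matrix (Fin 2) (Fin 2) ℂ :=
  (1 / 2 : ℂ) • (1 + (if b then -(η : ℂ) else (η : ℂ)) • (if y then sigmaZ else sigmaX))

/-- Charlie's sharp measurements along σx and σz. -/
def Copt (z c : Bool) : Matrix (Fin 2) (Fin 2) ℂ :=
  (1 / 2 : ℂ) • (1 + (if c then (-1 : ℂ) else 1) • (if z then sigmaZ else sigmaX))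

-- auxiliary development

def sig (y : Bool) : Matrix (Fin 2) (Fin 2) ℂ := if y then sigmaZ else sigmaX

lemma sig_herm (y : Bool) : (sig y)ᴴ = sig y := by
  cases y <;> simp [sig, sigmaX, sigmaZ] <;>
    · ext i j; fin_cases i <;> fin_cases j <;> simp

lemma sig_sq (y : Bool) : sig y * sig y = 1 := by
  cases y <;> simp [sig, sigmaX, sigmaZ] <;>
    · ext i j; fin_cases i <;> fin_cases j <;> simp [Matrix.mul_apply, Fin.sum_univ_two, Matrix.one_apply]

def Pp (y : Bool) : Matrix (Fin 2) (Fin 2) ℂ := (1/2 : ℂ) • (1 + sig y)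
def Pm (y : Bool) : Matrix (Fin 2) (Fin 2) ℂ := (1/2 : ℂ) • (1 - sig y)

lemma Pp_herm (y : Bool) : (Pp y)ᴴ = Pp y := by
  simp [Pp, Matrix.conjTranspose_smul, Matrix.conjTranspose_add, sig_herm]
lemma Pm_herm (y : Bool) : (Pm y)ᴴ = Pm y := by
  simp [Pm, Matrix.conjTranspose_smul, Matrix.conjTranspose_sub, sig_herm]
lemma Pp_sq (y : Bool) : Pp y * Pp y = Pp y := by
  simp only [Pp, Matrix.smul_mul, Matrix.mul_smul, smul_smul, add_mul, mul_add,
    Matrix.one_mul, Matrix.mul_one, sig_sq]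
  module
lemma Pm_sq (y : Bool) : Pm y * Pm y = Pm y := by
  simp only [Pm, Matrix.smul_mul, Matrix.mul_smul, smul_smul, sub_mul, mul_sub,
    Matrix.one_mul, Matrix.mul_one, sig_sq]
  module
lemma Pp_mul_Pm (y : Bool) : Pp y * Pm y = 0 := by
  simp only [Pp, Pm, Matrix.smul_mul, Matrix.mul_smul, smul_smul, add_mul, mul_sub,
    Matrix.one_mul, Matrix.mul_one, sig_sq]
  module
lemma Pm_mul_Pp (y : Bool) : Pm y * Pp y = 0 := by
  simp only [Pp, Pm, Matrix.smul_mul, Matrix.mul_smul, smul_smul, sub_mul, mul_add,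
    Matrix.one_mul, Matrix.mul_one, sig_sq]
  module

lemma psd_smul_proj (r : ℝ) (hr : 0 ≤ r) (P : Matrix (Fin 2) (Fin 2) ℂ)
    (hP : Pᴴ = P) (hP2 : P * P = P) : ((r : ℂ) • P).PosSemidef := by
  have h := Matrix.posSemidef_conjTranspose_mul_self ((Real.sqrt r : ℂ) • P)
  have e : ((Real.sqrt r : ℂ) • P)ᴴ * ((Real.sqrt r : ℂ) • P) = (r : ℂ) • P := by
    rw [Matrix.conjTranspose_smul, hP, Matrix.smul_mul, Matrix.mul_smul, hP2, smul_smul]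
    congr 1
    simp [Complex.star_def, Complex.conj_ofReal, ← Complex.ofReal_mul, Real.mul_self_sqrt hr]
  rwa [e] at h

def Kopt (η : ℝ) (y b : Bool) : Matrix (Fin 2) (Fin 2) ℂ :=
  ((Real.sqrt ((1 + (if b then -η else η))/2) : ℂ)) • Pp y +
  ((Real.sqrt ((1 - (if b then -η else η))/2) : ℂ)) • Pm y

lemma Kopt_psd (η : ℝ) (y b : Bool) : (Kopt η y b).PosSemidef :=
  (psd_smul_proj _ (Real.sqrt_nonneg _) _ (Pp_herm y) (Pp_sq y)).add
    (psd_smul_proj _ (Real.sqrt_nonneg _) _ (Pm_herm y) (Pm_sq y))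

lemma Kopt_sq (η : ℝ) (hη : η ∈ Set.Icc (0:ℝ) 1) (y b : Bool) :
    Kopt η y b * Kopt η y b = Mopt η y b := by
  obtain ⟨h0, h1⟩ := hη
  set e : ℝ := if b then -η else η with he
  have he1 : (1 + e)/2 ≥ 0 := by cases b <;> simp [he] <;> linarith
  have he2 : (1 - e)/2 ≥ 0 := by cases b <;> simp [he] <;> linarith
  have hp : (Real.sqrt ((1+e)/2) : ℂ) * (Real.sqrt ((1+e)/2) : ℂ) = (((1+e)/2 : ℝ) : ℂ) := by
    rw [← Complex.ofReal_mul, Real.mul_self_sqrt he1]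
  have hm : (Real.sqrt ((1-e)/2) : ℂ) * (Real.sqrt ((1-e)/2) : ℂ) = (((1-e)/2 : ℝ) : ℂ) := by
    rw [← Complex.ofReal_mul, Real.mul_self_sqrt he2]
  have expand : Kopt η y b * Kopt η y b =
      (((1+e)/2 : ℝ) : ℂ) • Pp y + (((1-e)/2 : ℝ) : ℂ) • Pm y := by
    simp only [Kopt, ← he, add_mul, mul_add, Matrix.smul_mul, Matrix.mul_smul, smul_smul,
      Pp_sq, Pm_sq, Pp_mul_Pm, Pm_mul_Pp, smul_zero, add_zero, zero_add, hp, hm]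
    try abel
  rw [expand, Mopt, Pp, Pm]
  rw [show ((if b then -(η:ℂ) else (η:ℂ))) = ((e : ℝ) : ℂ) by cases b <;> simp [he]]
  push_cast
  set E := ((e : ℝ) : ℂ)
  set S := sig y
  rw [show (if y then sigmaZ else sigmaX) = S from rfl]
  module

set_option maxHeartbeats 4000000 in
/-- For the explicit strategy with square preparations, unsharp Lüders
instruments `K_{b|y} = √(M_{b|y})` of sharpness `η`, and sharp measurements
for Charlie, the witnesses are `W_AB = (2 + √2 η)/4` and
`W_AC = (4 + √2 + √(2 − 2η²))/8`. -/
theorem explicit_strategy_witness_values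
    (η : ℝ) (hη : η ∈ Set.Icc (0 : ℝ) 1)
    (K : Bool → Bool → Matrix (Fin 2) (Fin 2) ℂ)
    (hKpsd : ∀ y b, (K y b).PosSemidef)
    (hKsq : ∀ y b, K y b * K y b = Mopt η y b) :
    WAB rhoOpt K = (2 + Real.sqrt 2 * η) / 4 ∧
    WAC rhoOpt K Copt = (4 + Real.sqrt 2 + Real.sqrt (2 - 2 * η ^ 2)) / 8 := by
  have hK : ∀ y b, K y b = Kopt η y b := fun y b =>
    (by
      open scoped MatrixOrder Matrix.Norms.L2Operator in
      exact (CFC.sq_eq_sq_iff (K y b) (Kopt η y b) (hKpsd y b).nonneg (Kopt_psd η y b).nonneg).mp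
        (by rw [pow_two, pow_two, hKsq, Kopt_sq η hη]))
  have hM : ∀ y b, (K y b)ᴴ * K y b = Mopt η y b := fun y b => by
    rw [(hKpsd y b).1, hKsq]
  have hs2 : Real.sqrt 2 * Real.sqrt 2 = 2 := Real.mul_self_sqrt (by norm_num)
  have hs2ne : (Real.sqrt 2 : ℝ) ≠ 0 := by positivity
  constructor
  · unfold WAB
    simp only [Fintype.sum_prod_type, Fintype.sum_bool, bit, hM]
    simp only [rhoOpt, Mopt, sigmaX, sigmaZ, if_true, if_false, Bool.cond_true]
    simp [Matrix.trace_fin_two, Matrix.mul_apply, Fin.sum_univ_two, Matrix.add_apply,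
      Matrix.sub_apply, Matrix.smul_apply, Matrix.one_apply, Complex.add_re, Complex.mul_re,
      Complex.ofReal_re, Complex.ofReal_im]
    ring
  · obtain ⟨h0, h1⟩ := hη
    set c : ℝ := Real.sqrt (1 - η^2) with hcdef
    set p : ℝ := Real.sqrt ((1+η)/2) with hpdef
    set m : ℝ := Real.sqrt ((1-η)/2) with hmdef
    have hp2 : p * p = (1+η)/2 := Real.mul_self_sqrt (by linarith)
    have hm2 : m * m = (1-η)/2 := Real.mul_self_sqrt (by linarith)
    have hpm : c = 2 * (p * m) := by
      rw [hcdef, show (1 - η^2) = (2*(p*m))^2 by nlinarith [hp2, hm2]]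
      exact Real.sqrt_sq (by positivity)
    have hgc : Real.sqrt (2 - 2*η^2) = Real.sqrt 2 * c := by
      rw [hcdef, ← Real.sqrt_mul (by norm_num)]
      congr 1; ring
    -- the Lüders channel sum
    have hsum : ∀ (y : Bool) (A B : Matrix (Fin 2) (Fin 2) ℂ),
        ∑ b : Bool, ((K y b * A * (K y b)ᴴ * B).trace).re =
        (((Pp y * A * Pp y + Pm y * A * Pm y
          + ((c:ℝ):ℂ) • (Pp y * A * Pm y + Pm y * A * Pp y)) * B).trace).re := by
      intro y A B
      have hKt : Kopt η y true = ((m:ℝ):ℂ) • Pp y + ((p:ℝ):ℂ) • Pm y := by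
        rw [Kopt, if_pos rfl, show (1 + -η)/2 = (1-η)/2 by ring,
          show (1 - -η)/2 = (1+η)/2 by ring]
      have hKf : Kopt η y false = ((p:ℝ):ℂ) • Pp y + ((m:ℝ):ℂ) • Pm y := by
        rw [Kopt, if_neg Bool.false_ne_true]
      have hherm : ∀ b, (K y b)ᴴ = K y b := fun b => (hKpsd y b).1
      have heq : K y true * A * (K y true)ᴴ + K y false * A * (K y false)ᴴ =
          Pp y * A * Pp y + Pm y * A * Pm y
            + ((c:ℝ):ℂ) • (Pp y * A * Pm y + Pm y * A * Pp y) := by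
        simp only [hherm, hK, hKt, hKf]
        simp only [Matrix.conjTranspose_add, Matrix.conjTranspose_smul, Pp_herm, Pm_herm,
          Complex.star_def, Complex.conj_ofReal]
        simp only [Matrix.add_mul, Matrix.mul_add, Matrix.smul_mul, Matrix.mul_smul, smul_smul,
          smul_add]
        match_scalars
        all_goals (push_cast; norm_cast)
        · linear_combination hm2 + hp2
        · linear_combination -hpm
        · linear_combination -hpm
        · linear_combination hm2 + hp2
      rw [Fintype.sum_bool, ← Complex.add_re, ← Matrix.trace_add, ← Matrix.add_mul, heq]
    have key : ∀ (A : Matrix (Fin 2) (Fin 2) ℂ) (B : Bool → Matrix (Fin 2) (Fin 2) ℂ) (y : Bool),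
        (∑ b : Bool, ∑ z : Bool, ((K y b * A * (K y b)ᴴ * B z).trace).re)
        = ∑ z : Bool, (((Pp y * A * Pp y + Pm y * A * Pm y
            + ((c:ℝ):ℂ) • (Pp y * A * Pm y + Pm y * A * Pp y)) * B z).trace).re := by
      intro A B y
      have h1 := hsum y A (B true)
      have h2 := hsum y A (B false)
      simp only [Fintype.sum_bool] at h1 h2 ⊢
      linarith [h1, h2]
    clear hsum
    clear_value c p m
    unfold WAC
    simp only [key]
    rw [hgc]
    simp only [Fintype.sum_prod_type, Fintype.sum_bool, bit, rhoOpt, Copt, Pp, Pm, sig,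
      sigmaX, sigmaZ, if_true, if_false]
    simp [Matrix.trace_fin_two, Matrix.mul_apply, Fin.sum_univ_two, Matrix.add_apply,
      Matrix.sub_apply, Matrix.smul_apply, Matrix.one_apply, Complex.add_re, Complex.mul_re,
      Complex.ofReal_re, Complex.ofReal_im]
    field_simp
    ring_nf
end
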